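/- In the triad example on the path network 1–2–3 with the stated potential outcomes and the assignment mechanism that draws uniformly from assignment vectors with exactly two units treated, all unit-level spillover effects on the treated for units 1 and 3 equal +1, yet the exposure-mapping estimand τ((1,1),(1,0)) = (1/2)Σ_{i∈{1,3}}(E[Y_i | T_i=(1,1)] − E[Y_i | T_i=(1,0)]) equals −1. -/

import Mathlib

open Finset
open scoped Classical

noncomputable section

/-- Probability of event `A` under mass function `p` on a finite space. -/
def prb {Ω : Type*} [Fintype Ω] (p : Ω → ℝ) (A : Ω → Prop) : ℝ :=
  ∑ ω, if A ω then p ω else 0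

/-- Unnormalized expectation of `f` on the event `A`. -/
def eiv {Ω : Type*} [Fintype Ω] (p : Ω → ℝ) (f : Ω → ℝ) (A : Ω → Prop) : ℝ :=
  ∑ ω, if A ω then p ω * f ω else 0

/-- Expectation of `f`. -/
def expv {Ω : Type*} [Fintype Ω] (p : Ω → ℝ) (f : Ω → ℝ) : ℝ := ∑ ω, p ω * f ω

/-- Conditional expectation of `f` given the event `A`. -/
def cexp {Ω : Type*} [Fintype Ω] (p : Ω → ℝ) (f : Ω → ℝ) (A : Ω → Prop) : ℝ :=
  eiv p f A / prb p A

/-- Conditional probability of `A` given `B`. -/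
def cpr {Ω : Type*} [Fintype Ω] (p : Ω → ℝ) (A B : Ω → Prop) : ℝ :=
  prb p (fun ω => A ω ∧ B ω) / prb p B

/-- Real value of a boolean treatment. -/
def bR : Bool → ℝ := fun x => if x then 1 else 0

/-- Assignment: uniform over the three vectors with exactly two treated units. -/
def pTriad : (Fin 3 → Bool) → ℝ := fun d =>
  if d = ![true, true, false] ∨ d = ![true, false, true] ∨ d = ![false, true, true]
  then 1/3 else 0

/-- Potential outcomes of unit 1 on the path 1–2–3:
`Y₁(1,0,0)=0, Y₁(1,1,0)=1, Y₁(1,0,1)=2, Y₁(1,1,1)=3`, and `0` otherwise. -/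
def Y1triad : (Fin 3 → Bool) → ℝ := fun d =>
  if d 0 = true then bR (d 1) + 2 * bR (d 2) else 0

/-- Potential outcomes of unit 3 on the path 1–2–3:
`Y₃(0,0,1)=0, Y₃(0,1,1)=1, Y₃(1,0,1)=2, Y₃(1,1,1)=3`, and `0` otherwise. -/
def Y3triad : (Fin 3 → Bool) → ℝ := fun d =>
  if d 2 = true then bR (d 1) + 2 * bR (d 0) else 0

lemma sum8 (f : (Fin 3 → Bool) → ℝ) :
    ∑ ω, f ω =
      f ![false,false,false] + f ![false,false,true] + f ![false,true,false] +
      f ![false,true,true] + f ![true,false,false] + f ![true,false,true] +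
      f ![true,true,false] + f ![true,true,true] := by
  rw [show (univ : Finset (Fin 3 → Bool)) =
      {![false,false,false], ![false,false,true], ![false,true,false], ![false,true,true],
       ![true,false,false], ![true,false,true], ![true,true,false], ![true,true,true]} from by decide]
  repeat rw [Finset.sum_insert (by decide)]
  rw [Finset.sum_singleton]
  ring

/-- in the triad example on the path network 1–2–3 (units 1 and 3 each have the
single neighbor 2, so `Tᵢ = (Dᵢ, D₂)` for `i ∈ {1,3}`), with assignment uniform over the
vectors with exactly two treated units, all unit-level spillover effects on the treated equal
`+1`, yet `τ((1,1),(1,0)) = -1`. -/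
theorem stmt10 :
    (∀ d3 : Bool, Y1triad ![true, true, d3] - Y1triad ![true, false, d3] = 1) ∧
    (∀ d1 : Bool, Y3triad ![d1, true, true] - Y3triad ![d1, false, true] = 1) ∧
    (1 / 2 : ℝ) *
      ((cexp pTriad Y1triad (fun d => d 0 = true ∧ d 1 = true) -
        cexp pTriad Y1triad (fun d => d 0 = true ∧ d 1 = false)) +
       (cexp pTriad Y3triad (fun d => d 2 = true ∧ d 1 = true) -
        cexp pTriad Y3triad (fun d => d 2 = true ∧ d 1 = false))) = -1 := by
  refine ⟨fun d3 => by cases d3 <;> norm_num [Y1triad, bR, Matrix.cons_val_two, Matrix.vecHead, Matrix.vecTail], fun d1 => by cases d1 <;> norm_num [Y3triad, bR, Matrix.cons_val_two, Matrix.vecHead, Matrix.vecTail], ?_⟩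
  simp only [cexp, eiv, prb, sum8]
  norm_num [pTriad, Y1triad, Y3triad, bR, Matrix.vecCons_const, funext_iff, Fin.forall_fin_succ,
    Matrix.cons_val_zero, Matrix.cons_val_succ, Matrix.cons_val_two, Matrix.vecHead, Matrix.vecTail]
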